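/- Let X₁,…,Xₙ be ℕ-valued random variables on a probability space with S = X₁+⋯+Xₙ and S₋₁ = X₂+⋯+Xₙ. Suppose X₁ follows a Katz distribution with parameters a and b, where |a| < 1 and b > 0, and that X₁ is independent of S₋₁. Then for every integer k ≥ 1, the expected cumulative allocation satisfies E[X₁ · 1_{\{S≤k\}}] = (a+b) · ∑_{j=0}^{k−1} (1 − a^{j+1})/(1 − a) · P(S = k−1−j). -/

import Mathlib

open MeasureTheory ProbabilityTheory

/-- If `X₁` follows a Katz distribution with parameters `|a| < 1`, `b > 0`
and is independent of `S₋₁`, then for every `k ≥ 1`,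
`E[X₁ · 1_{S≤k}] = (a+b) ∑_{j=0}^{k-1} (1 - a^{j+1})/(1 - a) · P(S = k-1-j)`. -/
theorem expected_cumulative_allocation_katz'
    {Ω : Type*} [MeasurableSpace Ω] (μ : Measure Ω) [IsProbabilityMeasure μ]
    (n : ℕ) (X : Fin (n + 1) → Ω → ℕ) (hX : ∀ i, Measurable (X i))
    (S Sm : Ω → ℕ)
    (hS : ∀ ω, S ω = ∑ i, X i ω)
    (hSm : ∀ ω, Sm ω = ∑ i : Fin n, X i.succ ω)
    (a b : ℝ) (ha : |a| < 1) (hb : 0 < b)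
    (hkatz : ∀ k : ℕ, (μ {ω | X 0 ω = k + 1}).toReal
      = (a + b / (k + 1)) * (μ {ω | X 0 ω = k}).toReal)
    (hindep : IndepFun (X 0) Sm μ) :
    ∀ k : ℕ, 1 ≤ k →
      ∫ ω in {ω | S ω ≤ k}, (X 0 ω : ℝ) ∂μ
        = (a + b) * ∑ j ∈ Finset.range k, (1 - a ^ (j + 1)) / (1 - a) * (μ {ω | S ω = k - 1 - j}).toReal := by
  intro k _hk
  have hX0 : Measurable (X 0) := hX 0
  have hSm_meas : Measurable Sm := by
    have h : Sm = fun ω => ∑ i : Fin n, X i.succ ω := funext hSm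
    rw [h]
    exact Finset.measurable_sum _ fun i _ => hX i.succ
  have hsplit : ∀ ω, S ω = X 0 ω + Sm ω := by
    intro ω
    rw [hS, hSm, Fin.sum_univ_succ]
  set p : ℕ → ℝ := fun m => (μ {ω | X 0 ω = m}).toReal with hp
  set q : ℕ → ℝ := fun m => (μ {ω | Sm ω = m}).toReal with hq
  set E : ℕ → ℕ → Set Ω := fun m r => {ω | X 0 ω = m} ∩ {ω | Sm ω = r} with hE
  have hEmeas : ∀ m r, MeasurableSet (E m r) := fun m r =>
    (hX0 (measurableSet_singleton m)).inter (hSm_meas (measurableSet_singleton r))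
  have hEμ : ∀ m r, μ (E m r) = μ {ω | X 0 ω = m} * μ {ω | Sm ω = r} := fun m r =>
    hindep.measure_inter_preimage_eq_mul {m} {r} (measurableSet_singleton m)
      (measurableSet_singleton r)
  -- decomposition of level sets of S
  have hSdecomp : ∀ j : ℕ, {ω | S ω = j} = ⋃ m ∈ Finset.range (j + 1), E m (j - m) := by
    intro j
    ext ω
    have hω := hsplit ω
    simp only [Set.mem_setOf_eq, Set.mem_iUnion, hE, Set.mem_inter_iff, Finset.mem_range]
    constructor
    · intro h
      exact ⟨X 0 ω, by omega, rfl, by omega⟩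
    · rintro ⟨m, hm, h1, h2⟩
      omega
  have hconst : ∀ m r : ℕ, Set.EqOn (fun ω => (X 0 ω : ℝ)) (fun _ => (m : ℝ)) (E m r) := by
    intro m r ω hω
    simp only [hE, Set.mem_inter_iff, Set.mem_setOf_eq] at hω
    exact_mod_cast congrArg _ hω.1
  have hint : ∀ m r, IntegrableOn (fun ω => (X 0 ω : ℝ)) (E m r) μ := by
    intro m r
    exact (integrableOn_const (measure_ne_top _ _)).congr_fun
      (hconst m r).symm (hEmeas m r)
  have hEdisj : ∀ j : ℕ, Set.Pairwise ↑(Finset.range (j + 1))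
      (Function.onFun Disjoint fun m => E m (j - m)) := by
    intro j m _ m' _ hmm'
    refine Set.disjoint_left.2 fun ω h1 h2 => hmm' ?_
    simp only [hE, Set.mem_inter_iff, Set.mem_setOf_eq] at h1 h2
    omega
  set F : ℕ → ℝ := fun j => ∑ m ∈ Finset.range (j + 1), p m * q (j - m) with hFdef
  set G : ℕ → ℝ := fun j => ∑ m ∈ Finset.range (j + 1), (m : ℝ) * (p m * q (j - m)) with hGdef
  have hg : ∀ j, ∫ ω in {ω | S ω = j}, (X 0 ω : ℝ) ∂μ = G j := by
    intro j
    rw [hSdecomp j, integral_biUnion_finset _ (fun m _ => hEmeas m _) (hEdisj j)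
      (fun m _ => hint m _)]
    simp only [hGdef]
    refine Finset.sum_congr rfl fun m _ => ?_
    rw [setIntegral_congr_fun (hEmeas _ _) (hconst _ _), setIntegral_const, smul_eq_mul,
      measureReal_def, hEμ, ENNReal.toReal_mul]
    simp only [hp, hq]
    ring
  have hF : ∀ j, (μ {ω | S ω = j}).toReal = F j := by
    intro j
    rw [hSdecomp j, measure_biUnion_finset (hEdisj j) (fun m _ => hEmeas m _),
      ENNReal.toReal_sum (fun m _ => measure_ne_top μ _)]
    simp only [hFdef]
    refine Finset.sum_congr rfl fun m _ => ?_
    rw [hEμ, ENNReal.toReal_mul]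
  -- measurability / integrability on level sets
  have hSmeas : ∀ j : ℕ, MeasurableSet {ω | S ω = j} := by
    intro j
    rw [hSdecomp j]
    exact (Finset.range (j + 1)).measurableSet_biUnion fun m _ => hEmeas m _
  have hSint : ∀ j : ℕ, IntegrableOn (fun ω => (X 0 ω : ℝ)) {ω | S ω = j} μ := by
    intro j
    rw [hSdecomp j]
    exact integrableOn_finset_iUnion.2 fun m _ => hint m _
  have hSle : {ω | S ω ≤ k} = ⋃ j ∈ Finset.range (k + 1), {ω | S ω = j} := by
    ext ω
    simp only [Set.mem_setOf_eq, Set.mem_iUnion, Finset.mem_range]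
    constructor
    · intro h; exact ⟨S ω, by omega, rfl⟩
    · rintro ⟨j, hj, h⟩; omega
  have hSdisj : Set.Pairwise ↑(Finset.range (k + 1))
      (Function.onFun Disjoint fun j => {ω | S ω = j}) := by
    intro j _ j' _ hjj'
    refine Set.disjoint_left.2 fun ω h1 h2 => hjj' ?_
    simp only [Set.mem_setOf_eq] at h1 h2
    omega
  have hmain : ∫ ω in {ω | S ω ≤ k}, (X 0 ω : ℝ) ∂μ = ∑ j ∈ Finset.range (k + 1), G j := by
    rw [hSle, integral_biUnion_finset _ (fun j _ => hSmeas j) hSdisj (fun j _ => hSint j)]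
    exact Finset.sum_congr rfl fun j _ => hg j
  -- the Katz recursion for p
  have hkatz' : ∀ m : ℕ, ((m : ℝ) + 1) * p (m + 1) = (a * m + (a + b)) * p m := by
    intro m
    have h := hkatz m
    have hm1 : ((m : ℝ) + 1) ≠ 0 := by positivity
    simp only [hp]
    push_cast at h ⊢
    field_simp at h ⊢
    linarith [h]
  -- recursion for G
  have hrec : ∀ j, G (j + 1) = a * G j + (a + b) * F j := by
    intro j
    simp only [hGdef, hFdef]
    rw [Finset.sum_range_succ' (fun m => (m : ℝ) * (p m * q (j + 1 - m))) (j + 1)]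
    simp only [Nat.cast_zero, zero_mul, add_zero, Nat.add_sub_add_right, Nat.cast_add,
      Nat.cast_one]
    rw [Finset.mul_sum, Finset.mul_sum, ← Finset.sum_add_distrib]
    refine Finset.sum_congr rfl fun m _ => ?_
    have h := hkatz' m
    linear_combination q (j - m) * h
  have hG0 : G 0 = 0 := by simp [hGdef]
  -- closed form for G
  have hclosed : ∀ j, G j = (a + b) * ∑ i ∈ Finset.range j, a ^ i * F (j - 1 - i) := by
    intro j
    induction j with
    | zero => simp [hG0]
    | succ j ih =>
      rw [hrec j, ih, Finset.sum_range_succ' (fun i => a ^ i * F (j + 1 - 1 - i)) j]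
      simp only [Nat.add_sub_cancel, pow_zero, one_mul, Nat.sub_zero]
      have e1 : ∀ i ∈ Finset.range j, a ^ (i + 1) * F (j - (i + 1)) = a * (a ^ i * F (j - 1 - i)) := by
        intro i _
        rw [show j - (i + 1) = j - 1 - i from by omega]
        ring
      rw [Finset.sum_congr rfl e1, ← Finset.mul_sum]
      ring
  -- swap of the triangular double sum
  have hswap : ∀ K : ℕ, ∑ j ∈ Finset.range K, ∑ i ∈ Finset.range (j + 1), a ^ i * F (j - i)
      = ∑ r ∈ Finset.range K, (∑ i ∈ Finset.range (K - r), a ^ i) * F r := by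
    intro K
    induction K with
    | zero => simp
    | succ K ih =>
      rw [Finset.sum_range_succ, ih,
        Finset.sum_range_succ (fun r => (∑ i ∈ Finset.range (K + 1 - r), a ^ i) * F r) K]
      have h1 : ∀ r ∈ Finset.range K, (∑ i ∈ Finset.range (K + 1 - r), a ^ i) * F r
          = (∑ i ∈ Finset.range (K - r), a ^ i) * F r + a ^ (K - r) * F r := by
        intro r hr
        rw [Finset.mem_range] at hr
        rw [show K + 1 - r = (K - r) + 1 from by omega, Finset.sum_range_succ]
        ring
      rw [Finset.sum_congr rfl h1, Finset.sum_add_distrib]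
      have h2 : ∑ i ∈ Finset.range (K + 1), a ^ i * F (K - i)
          = ∑ i ∈ Finset.range (K + 1), a ^ (K - i) * F i := by
        rw [← Finset.sum_range_reflect (fun i => a ^ (K - i) * F i) (K + 1)]
        refine Finset.sum_congr rfl fun i hi => ?_
        rw [Finset.mem_range] at hi
        rw [show K + 1 - 1 - i = K - i from by omega, show K - (K - i) = i from by omega]
      rw [h2, Finset.sum_range_succ (fun i => a ^ (K - i) * F i) K,
        show K + 1 - K = 1 from by omega]
      simp only [Nat.sub_self, pow_zero, one_mul, Nat.sub_zero, Finset.sum_range_one]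
      ring
  -- geometric sums
  have ha1 : a ≠ 1 := by
    intro h
    rw [h] at ha
    simp at ha
  have h1a : (1 : ℝ) - a ≠ 0 := fun h => ha1 (by linarith)
  have hgeom : ∀ m : ℕ, ∑ i ∈ Finset.range m, a ^ i = (1 - a ^ m) / (1 - a) := by
    intro m
    have ha1' : a - 1 ≠ 0 := fun h => ha1 (by linarith)
    rw [geom_sum_eq ha1, div_eq_div_iff ha1' h1a]
    ring
  -- assemble
  rw [hmain, Finset.sum_range_succ' G k, hG0, add_zero]
  have h3 : ∀ j ∈ Finset.range k, G (j + 1) = (a + b) * ∑ i ∈ Finset.range (j + 1), a ^ i * F (j - i) := by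
    intro j _
    rw [hclosed (j + 1)]
    congr 1
  rw [Finset.sum_congr rfl h3, ← Finset.mul_sum, hswap k]
  congr 1
  rw [← Finset.sum_range_reflect (fun r => (∑ i ∈ Finset.range (k - r), a ^ i) * F r) k]
  refine Finset.sum_congr rfl fun j hj => ?_
  rw [Finset.mem_range] at hj
  rw [show k - (k - 1 - j) = j + 1 from by omega, hgeom (j + 1), hF (k - 1 - j)]
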